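/- Every root in ℚ₂ of the polynomial X² - 3X + 8 is a cube in ℚ₂: if x ∈ ℚ₂ satisfies x² - 3x + 8 = 0, then there exists y ∈ ℚ₂ with y³ = x. -/

import Mathlib

open PadicInt Polynomial

lemma two_cast_eq : ((2 : ℕ) : ℤ_[2]) = 2 := by norm_cast

-- every 2-adic unit is a cube
lemma cube_root_of_unit (a : ℤ_[2]) (ha : ‖a‖ = 1) : ∃ z : ℤ_[2], z ^ 3 = a := by
  have hodd : (2 : ℤ_[2]) ∣ a - 1 := by
    have h1 : ¬ (2 : ℤ_[2]) ∣ a := by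
      rw [← two_cast_eq, ← norm_lt_one_iff_dvd, ha]; exact lt_irrefl 1
    have h2 : (2 : ℤ_[2]) ∣ a * (a - 1) := by
      rw [← two_cast_eq, ← Ideal.mem_span_singleton, ← maximalIdeal_eq_span_p, ← ker_toZMod,
        RingHom.mem_ker, map_mul, map_sub, map_one]
      have : ∀ t : ZMod 2, t * (t - 1) = 0 := by decide
      exact this _
    have hp : Prime (2 : ℤ_[2]) := by
      have := PadicInt.prime_p (p := 2); rwa [two_cast_eq] at this
    rcases hp.2.2 _ _ h2 with h | h
    · exact absurd h h1
    · exact h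
  set F : Polynomial ℤ_[2] := X ^ 3 - C a with hF
  have hderiv : F.derivative = C 3 * X ^ 2 := by simp [hF]; rw [← C_1, ← C_add]; norm_num
  have hFa : F.eval a = a ^ 3 - a := by simp [hF]
  have hF'a : F.derivative.eval a = 3 * a ^ 2 := by simp [hderiv]
  have h3 : ‖(3 : ℤ_[2])‖ = 1 := by
    rcases lt_or_eq_of_le (norm_le_one (3 : ℤ_[2])) with h | h
    · exfalso
      have h' : ‖((3 : ℤ) : ℤ_[2])‖ < 1 := by push_cast; exact h
      have := (norm_int_lt_one_iff_dvd (p := 2) 3).mp h'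
      omega
    · exact h
  have hnd : ‖F.derivative.eval a‖ = 1 := by
    rw [hF'a, norm_mul, h3, norm_pow, ha]; norm_num
  have hnum : ‖F.eval a‖ < ‖F.derivative.eval a‖ ^ 2 := by
    rw [hnd, hFa, one_pow]
    have he : a ^ 3 - a = (a - 1) * (a * (a + 1)) := by ring
    rw [he, norm_mul]
    have h1 : ‖a - 1‖ < 1 := by
      rw [← two_cast_eq] at hodd; exact (norm_lt_one_iff_dvd _).mpr hodd
    calc ‖a - 1‖ * ‖a * (a + 1)‖ ≤ ‖a - 1‖ * 1 :=
          mul_le_mul_of_nonneg_left (norm_le_one _) (norm_nonneg _)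
      _ < 1 := by rwa [mul_one]
  obtain ⟨z, hz, -⟩ := hensels_lemma hnum
  refine ⟨z, ?_⟩
  have : z ^ 3 - a = 0 := by simpa [hF] using hz
  exact sub_eq_zero.mp this

/-- Every root in `ℚ₂` of `X² - 3X + 8` is a cube in `ℚ₂`. -/
theorem root_of_quadratic_is_cube_in_Q2 (x : ℚ_[2]) (hx : x ^ 2 - 3 * x + 8 = 0) :
    ∃ y : ℚ_[2], y ^ 3 = x := by
  have h3q : ‖(3 : ℚ_[2])‖ = 1 := by
    rcases lt_or_eq_of_le (by exact_mod_cast Padic.norm_int_le_one (p := 2) 3 :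
        ‖(3 : ℚ_[2])‖ ≤ 1) with h | h
    · exfalso
      have h' : ‖((3 : ℤ) : ℚ_[2])‖ < 1 := by push_cast; exact h
      have := (Padic.norm_intCast_lt_one_iff (p := 2) (k := 3)).mp h'
      omega
    · exact h
  have h8q : ‖(8 : ℚ_[2])‖ = 1 / 8 := by
    have : (8 : ℚ_[2]) = (2 : ℚ_[2]) ^ 3 := by norm_num
    rw [this, _root_.norm_pow]
    have h2 : ‖(2 : ℚ_[2])‖ = 1 / 2 := by
      have := Padic.norm_p (p := 2); push_cast at this; rw [this]; norm_num
    rw [h2]; norm_num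
  have hx1 : ‖x‖ ≤ 1 := by
    by_contra h
    push_neg at h
    have hsq : x ^ 2 = 3 * x - 8 := by linear_combination hx
    have h1 : ‖x‖ ^ 2 ≤ ‖x‖ := by
      calc ‖x‖ ^ 2 = ‖x ^ 2‖ := (_root_.norm_pow _ _).symm
        _ = ‖3 * x - 8‖ := by rw [hsq]
        _ = ‖3 * x + (-8)‖ := by ring_nf
        _ ≤ max ‖3 * x‖ ‖(-8 : ℚ_[2])‖ := Padic.nonarchimedean _ _
        _ = max ‖3 * x‖ ‖(8 : ℚ_[2])‖ := by rw [norm_neg]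
        _ ≤ ‖x‖ := by
            apply max_le
            · rw [_root_.norm_mul, h3q, one_mul]
            · rw [h8q]; linarith
    nlinarith
  rcases lt_or_eq_of_le hx1 with hlt | heq
  · -- ‖x‖ < 1 : x = 8u with u a unit
    have hprod : x * (x - 3) = -8 := by linear_combination hx
    have hx3 : ‖x - 3‖ = 1 := by
      have hne : ‖x‖ ≠ ‖(-3 : ℚ_[2])‖ := by rw [norm_neg, h3q]; exact ne_of_lt hlt
      have := Padic.add_eq_max_of_ne (q := x) (r := -3) hne
      rw [show x + (-3) = x - 3 by ring] at this
      rw [this, max_eq_right (by rw [norm_neg, h3q]; exact hlt.le), norm_neg, h3q]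
    have hxnorm : ‖x‖ = 1 / 8 := by
      have h1 : ‖x * (x - 3)‖ = ‖(-8 : ℚ_[2])‖ := by rw [hprod]
      rw [_root_.norm_mul, hx3, mul_one, norm_neg, h8q] at h1
      exact h1
    have h8ne : (8 : ℚ_[2]) ≠ 0 := by
      intro h; rw [h, norm_zero] at h8q; norm_num at h8q
    set u : ℚ_[2] := x / 8 with hu
    have hunorm : ‖u‖ = 1 := by
      rw [hu, norm_div, hxnorm, h8q]; norm_num
    have hble : ‖u‖ ≤ 1 := le_of_eq hunorm
    set b : ℤ_[2] := ⟨u, hble⟩ with hb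
    obtain ⟨z, hz⟩ := cube_root_of_unit b (by simpa [hb, PadicInt.norm_def] using hunorm)
    refine ⟨2 * (z : ℚ_[2]), ?_⟩
    have hzc : ((z : ℚ_[2])) ^ 3 = u := by
      have : ((z ^ 3 : ℤ_[2]) : ℚ_[2]) = ((b : ℤ_[2]) : ℚ_[2]) := by rw [hz]
      push_cast at this
      simpa [hb] using this
    calc (2 * (z : ℚ_[2])) ^ 3 = 8 * (z : ℚ_[2]) ^ 3 := by ring
      _ = 8 * u := by rw [hzc]
      _ = x := by rw [hu]; field_simp
  · -- ‖x‖ = 1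
    set a : ℤ_[2] := ⟨x, hx1⟩ with ha
    obtain ⟨z, hz⟩ := cube_root_of_unit a (by simpa [ha, PadicInt.norm_def] using heq)
    refine ⟨(z : ℚ_[2]), ?_⟩
    have : ((z ^ 3 : ℤ_[2]) : ℚ_[2]) = ((a : ℤ_[2]) : ℚ_[2]) := by rw [hz]
    push_cast at this
    simpa [ha] using this
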